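/- arXiv:1803.10412 — 3 statements merged into one kernel-verified Lean document; each statement's English description precedes it below -/
import Mathlib

section
/- Universal property of the associative completion: let G be an inversional local groupoid and let H be a (global) groupoid over the same base M. For every morphism of local groupoids F : G → H (a map commuting with source, target, unit, and with multiplication wherever it is defined in G), there exists a unique groupoid morphism F̃ : AC(G) → H such that F̃ composed with the completion map G → AC(G) (sending g to the class of the one-letter word (g)) equals F. -/
/-- An (algebraic) local groupoid over a base `M`: a set of arrows `G` with source,
target, unit, a partially defined multiplication (with domain `D`) satisfying the
unit laws and 3-associativity wherever defined. -/
structure LocalGroupoid (G : Type*) (M : Type*) where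
  s : G → M
  t : G → M
  unit : M → G
  s_unit : ∀ x, s (unit x) = x
  t_unit : ∀ x, t (unit x) = x
  /-- the domain of the multiplication -/
  D : G → G → Prop
  D_st : ∀ {g h}, D g h → s g = t h
  mul : G → G → G
  D_unit_right : ∀ g, D g (unit (s g))
  D_unit_left : ∀ g, D (unit (t g)) g
  s_mul : ∀ {g h}, D g h → s (mul g h) = s h
  t_mul : ∀ {g h}, D g h → t (mul g h) = t g
  mul_unit_right : ∀ g, mul g (unit (s g)) = g
  unit_mul : ∀ g, mul (unit (t g)) g = g
  assoc3 : ∀ {g h k}, D g h → D (mul g h) k → D h k → D g (mul h k) →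
    mul (mul g h) k = mul g (mul h k)

namespace LocalGroupoid

variable {G : Type*} {M : Type*} (L : LocalGroupoid G M)

/-- A well-formed word: a nonempty list `(w₁, …, wₙ)` of arrows with
`s wᵢ = t wᵢ₊₁`. -/
def WFWord (w : List G) : Prop := w ≠ [] ∧ w.Chain' (fun a b => L.s a = L.t b)

/-- An elementary contraction of words: replace an adjacent pair whose product is
defined by the product. -/
inductive Contr : List G → List G → Prop
  | mk (p q : List G) {g h : G} (hD : L.D g h) :
      Contr (p ++ g :: h :: q) (p ++ L.mul g h :: q)

/-- The equivalence relation on words generated by contractions and expansions. -/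
def WordEquiv : List G → List G → Prop := Relation.EqvGen L.Contr

/-- `ContractsTo w v`: `v` is obtained from `w` by a finite sequence of contractions
(equivalently, `w` is obtained from `v` by expansions, i.e. `v ≤ w`). -/
def ContractsTo : List G → List G → Prop := Relation.ReflTransGen L.Contr

/-- The type of well-formed words. -/
def Word := {w : List G // L.WFWord w}

instance wordSetoid : Setoid L.Word :=
  ⟨fun a b => L.WordEquiv a.1 b.1, by
    constructor
    · exact fun a => Relation.EqvGen.refl _
    · exact fun h => Relation.EqvGen.symm _ _ h
    · exact fun h1 h2 => Relation.EqvGen.trans _ _ _ h1 h2⟩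

/-- The associative completion of a local groupoid: well-formed words modulo
contractions and expansions. -/
def AC := Quotient L.wordSetoid

/-- The one-letter word `(g)`. -/
def singletonWord (g : G) : L.Word := ⟨[g], by simp [WFWord, List.Chain']⟩

/-- The completion map `G → AC(G)`. -/
def completion (g : G) : L.AC := Quotient.mk _ (L.singletonWord g)

/-- Target of a well-formed word: the target of its first letter. -/
def wordTgt (w : L.Word) : M := L.t (w.1.head w.2.1)

/-- Source of a well-formed word: the source of its last letter. -/
def wordSrc (w : L.Word) : M := L.s (w.1.getLast w.2.1)

/-- `b` is a two-sided inverse of `a`. -/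
def InvPair (a b : G) : Prop :=
  L.D a b ∧ L.D b a ∧ L.mul a b = L.unit (L.t a) ∧ L.mul b a = L.unit (L.s a)

/-- An arrow is invertible if it has a two-sided inverse. -/
def Invertible (a : G) : Prop := ∃ b, L.InvPair a b

/-- `LProd as seed r`: `r = a₁ (a₂ (⋯ (aₖ seed)))` where `as = [a₁, …, aₖ]`, all
products being defined. -/
inductive LProd : List G → G → G → Prop
  | nil (g : G) : LProd [] g g
  | cons {as : List G} {g p : G} (a : G) : LProd as g p → L.D a p → LProd (a :: as) g (L.mul a p)

/-- `RProd seed bs r`: `r = ((⋯((seed b₁) b₂)⋯) bₖ)` where `bs = [b₁, …, bₖ]`, all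
products being defined. -/
inductive RProd : G → List G → G → Prop
  | nil (g : G) : RProd g [] g
  | cons {bs : List G} {g r : G} (b : G) (hD : L.D g b) : RProd (L.mul g b) bs r → RProd g (b :: bs) r

/-- The inverse-decomposition property: every composable pair `(g,h)` decomposes
through invertible elements, either on the left:
`g = aₗ(⋯(a₂ a₁))` and `h = a₁⁻¹(⋯(aₗ⁻¹ (gh)))`, or on the right:
`h = ((b₁ b₂)⋯)bₘ` and `g = (((gh) bₘ⁻¹)⋯) b₁⁻¹`. -/
def InvDecomp : Prop :=
  ∀ g h, L.D g h →
    (∃ a : List (G × G), (∀ p ∈ a, L.InvPair p.1 p.2) ∧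
        L.LProd (a.map Prod.fst).reverse (L.unit (L.s g)) g ∧
        L.LProd (a.map Prod.snd) (L.mul g h) h) ∨
    (∃ b : List (G × G), (∀ p ∈ b, L.InvPair p.1 p.2) ∧
        L.RProd (L.unit (L.t h)) (b.map Prod.fst) h ∧
        L.RProd (L.mul g h) (b.map Prod.snd).reverse g)

/-- An associator at `x`: an arrow `g` with `s g = t g = x` such that some
well-formed word can be contracted both to `(g)` and to `(u x)`. -/
def IsAssociator (x : M) (g : G) : Prop :=
  L.s g = x ∧ L.t g = x ∧
    ∃ w, L.WFWord w ∧ L.ContractsTo w [g] ∧ L.ContractsTo w [L.unit x]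

/-- An arrow is inversional if it is a well-defined product of invertible elements. -/
def Inversional (g : G) : Prop :=
  ∃ w : List G, L.WFWord w ∧ (∀ a ∈ w, L.Invertible a) ∧ L.ContractsTo w [g]

/-- `EvalsTo w g`: some full bracketing of the word `w` can be evaluated (all
intermediate products being defined), with result `g`. -/
inductive EvalsTo : List G → G → Prop
  | single (g : G) : EvalsTo [g] g
  | mul {w1 w2 : List G} {g h : G} : EvalsTo w1 g → EvalsTo w2 h → L.D g h →
      EvalsTo (w1 ++ w2) (L.mul g h)

/-- Global associativity: all defined bracketings of a composable tuple agree. -/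
def GloballyAssociative : Prop := ∀ w g h, L.EvalsTo w g → L.EvalsTo w h → g = h

end LocalGroupoid

/-- A morphism of local groupoids. -/
structure IsMorphism {G₁ M₁ G₂ M₂ : Type*} (L₁ : LocalGroupoid G₁ M₁)
    (L₂ : LocalGroupoid G₂ M₂) (F : G₁ → G₂) (f : M₁ → M₂) : Prop where
  map_s : ∀ g, L₂.s (F g) = f (L₁.s g)
  map_t : ∀ g, L₂.t (F g) = f (L₁.t g)
  map_unit : ∀ x, F (L₁.unit x) = L₂.unit (f x)
  map_D : ∀ {g h}, L₁.D g h → L₂.D (F g) (F h)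
  map_mul : ∀ {g h}, L₁.D g h → F (L₁.mul g h) = L₂.mul (F g) (F h)

/-- A local groupoid is global (an honest groupoid) if multiplication is defined for
all matching pairs and every arrow is invertible. -/
structure IsGlobal {G M : Type*} (L : LocalGroupoid G M) : Prop where
  total : ∀ {g h}, L.s g = L.t h → L.D g h
  inv : ∀ g, L.Invertible g

section ACUnivAux

variable {G H M : Type*} {L : LocalGroupoid G M} {LH : LocalGroupoid H M}

/-- Composability relation in `H`. -/
private def Rc (LH : LocalGroupoid H M) (a b : H) : Prop := LH.s a = LH.t b

private lemma gassoc (hH : IsGlobal LH) {a b c : H}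
    (h1 : LH.s a = LH.t b) (h2 : LH.s b = LH.t c) :
    LH.mul (LH.mul a b) c = LH.mul a (LH.mul b c) :=
  LH.assoc3 (hH.total h1) (hH.total (by rw [LH.s_mul (hH.total h1), h2]))
    (hH.total h2) (hH.total (by rw [LH.t_mul (hH.total h2)]; exact h1))

/-- Left fold of the multiplication in `H`. -/
private def hv (LH : LocalGroupoid H M) (a : H) (l : List H) : H :=
  l.foldl LH.mul a

private lemma hv_nil (a : H) : hv LH a [] = a := rfl

private lemma hv_cons (a b : H) (l : List H) :
    hv LH a (b :: l) = hv LH (LH.mul a b) l := rfl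

private lemma chain_mul (hH : IsGlobal LH) {a b : H} {l : List H}
    (hab : LH.s a = LH.t b) (h : List.Chain' (Rc LH) (b :: l)) :
    List.Chain' (Rc LH) (LH.mul a b :: l) := by
  cases l with
  | nil => simp [List.Chain']
  | cons c l =>
    rcases List.isChain_cons_cons.1 h with ⟨hbc, hl⟩
    exact List.isChain_cons_cons.2 ⟨by rw [Rc, LH.s_mul (hH.total hab)]; exact hbc, hl⟩

private lemma mul_hv (hH : IsGlobal LH) {x a : H} {l : List H}
    (hx : LH.s x = LH.t a) (h : List.Chain' (Rc LH) (a :: l)) :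
    LH.mul x (hv LH a l) = hv LH (LH.mul x a) l := by
  induction l generalizing a x with
  | nil => rfl
  | cons b l ih =>
    rcases List.isChain_cons_cons.1 h with ⟨hab, hl⟩
    have hch : List.Chain' (Rc LH) (LH.mul a b :: l) := chain_mul hH hab hl
    have hx' : LH.s x = LH.t (LH.mul a b) := by rw [LH.t_mul (hH.total hab)]; exact hx
    rw [hv_cons, hv_cons, ih hx' hch, gassoc hH hx hab]

private lemma t_hv (hH : IsGlobal LH) {a : H} {l : List H}
    (h : List.Chain' (Rc LH) (a :: l)) : LH.t (hv LH a l) = LH.t a := by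
  induction l generalizing a with
  | nil => rfl
  | cons b l ih =>
    rcases List.isChain_cons_cons.1 h with ⟨hab, hl⟩
    rw [hv_cons, ih (chain_mul hH hab hl), LH.t_mul (hH.total hab)]

private lemma s_hv (hH : IsGlobal LH) {a : H} {l : List H}
    (h : List.Chain' (Rc LH) (a :: l)) :
    LH.s (hv LH a l) = LH.s ((a :: l).getLast (by simp)) := by
  induction l generalizing a with
  | nil => rfl
  | cons b l ih =>
    rcases List.isChain_cons_cons.1 h with ⟨hab, hl⟩
    rw [hv_cons, ih (chain_mul hH hab hl)]
    cases l with
    | nil => simp [LH.s_mul (hH.total hab)]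
    | cons c l => simp

private lemma hv_append (hH : IsGlobal LH) {a b : H} {l m : List H}
    (h : List.Chain' (Rc LH) (a :: (l ++ b :: m))) :
    hv LH a (l ++ b :: m) = LH.mul (hv LH a l) (hv LH b m) := by
  have h' : List.Chain' (Rc LH) ((a :: l) ++ (b :: m)) := h
  rcases List.isChain_append.1 h' with ⟨hal, hbm, hj⟩
  have hjunc : LH.s ((a :: l).getLast (by simp)) = LH.t b := by
    exact hj ((a :: l).getLast (by simp))
      (by simp [List.getLast?_eq_getLast]) b rfl
  have hs : LH.s (hv LH a l) = LH.t b := by rw [s_hv hH hal]; exact hjunc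
  rw [show hv LH a (l ++ b :: m) = hv LH (hv LH a l) (b :: m) from List.foldl_append ..,
    hv_cons, ← mul_hv hH hs hbm]

/-- Value of a nonempty word in `G` under `F`, multiplied out in `H`
(`none` for the empty word). -/
private def mval (F : G → H) (LH : LocalGroupoid H M) : List G → Option H
  | [] => none
  | g :: l => some (hv LH (F g) (l.map F))

private lemma mval_cons (F : G → H) (g : G) (l : List G) :
    mval F LH (g :: l) = some (hv LH (F g) (l.map F)) := rfl

private lemma chain_map {F : G → H} (hF : IsMorphism L LH F id) {l : List G}
    (h : List.Chain' (fun a b => L.s a = L.t b) l) :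
    List.Chain' (Rc LH) (l.map F) := by
  show List.IsChain _ (l.map F)
  rw [List.isChain_map]
  refine h.imp ?_
  intro a b hab
  rw [Rc, hF.map_s, hF.map_t, hab]

/-- Contractions preserve well-formedness in both directions. -/
private lemma contr_wf {w v : List G} (hc : L.Contr w v) :
    L.WFWord w ↔ L.WFWord v := by
  cases hc with
  | mk p q hD =>
    rename_i g h
    have hst : L.s g = L.t h := L.D_st hD
    constructor <;> rintro ⟨-, hch⟩ <;> refine ⟨by simp, ?_⟩
    · rcases List.isChain_append.1 hch with ⟨hp, hx, hj⟩
      rcases List.isChain_cons_cons.1 hx with ⟨-, hx'⟩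
      refine List.isChain_append.2 ⟨hp, ?_, ?_⟩
      · refine List.isChain_cons.2 ⟨?_, (List.isChain_cons.1 hx').2⟩
        intro y hy
        have := (List.isChain_cons.1 hx').1 y hy
        rw [L.s_mul hD]; exact this
      · intro x hx' y hy
        simp only [List.head?_cons, Option.mem_def, Option.some.injEq] at hy
        subst hy
        have := hj x hx' g rfl
        rw [L.t_mul hD]; exact this
    · rcases List.isChain_append.1 hch with ⟨hp, hx, hj⟩
      refine List.isChain_append.2 ⟨hp, ?_, ?_⟩
      · refine List.isChain_cons_cons.2 ⟨hst, List.isChain_cons.2 ⟨?_, (List.isChain_cons.1 hx).2⟩⟩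
        intro y hy
        have := (List.isChain_cons.1 hx).1 y hy
        rw [← L.s_mul hD]; exact this
      · intro x hx' y hy
        simp only [List.head?_cons, Option.mem_def, Option.some.injEq] at hy
        subst hy
        have := hj x hx' (L.mul g h) rfl
        rw [← L.t_mul hD]; exact this

private lemma contr_ne {w v : List G} (hc : L.Contr w v) : w ≠ [] ∧ v ≠ [] := by
  cases hc with
  | mk p q hD => exact ⟨by simp, by simp⟩

/-- Contractions preserve the value. -/
private lemma contr_mval (hH : IsGlobal LH) {F : G → H} (hF : IsMorphism L LH F id)
    {w v : List G} (hw : L.WFWord w) (hc : L.Contr w v) :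
    mval F LH w = mval F LH v := by
  cases hc with
  | mk p q hD =>
    rename_i g h
    have key : hv LH (F g) (F h :: q.map F) = hv LH (F (L.mul g h)) (q.map F) := by
      rw [hv_cons, hF.map_mul hD]
    cases p with
    | nil =>
      simpa [mval_cons] using congrArg some key
    | cons p0 p' =>
      have hv' : L.WFWord (p0 :: p' ++ L.mul g h :: q) := (contr_wf (.mk _ _ hD)).1 hw
      have hch1 : List.Chain' (Rc LH) (F p0 :: (p'.map F ++ F g :: F h :: q.map F)) := by
        have := chain_map hF hw.2
        simpa using this
      have hch2 : List.Chain' (Rc LH) (F p0 :: (p'.map F ++ F (L.mul g h) :: q.map F)) := by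
        have := chain_map hF hv'.2
        simpa using this
      have e1 : mval F LH (p0 :: p' ++ g :: h :: q)
          = some (LH.mul (hv LH (F p0) (p'.map F)) (hv LH (F g) (F h :: q.map F))) := by
        rw [show (p0 :: p' ++ g :: h :: q) = p0 :: (p' ++ g :: h :: q) from rfl, mval_cons]
        congr 1
        simpa using hv_append hH hch1
      have e2 : mval F LH (p0 :: p' ++ L.mul g h :: q)
          = some (LH.mul (hv LH (F p0) (p'.map F)) (hv LH (F (L.mul g h)) (q.map F))) := by
        rw [show (p0 :: p' ++ L.mul g h :: q) = p0 :: (p' ++ L.mul g h :: q) from rfl, mval_cons]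
        congr 1
        simpa using hv_append hH hch2
      rw [e1, e2, key]

private lemma equiv_wf {w v : List G} (he : L.WordEquiv w v) :
    L.WFWord w ↔ L.WFWord v := by
  induction he with
  | rel a b h => exact contr_wf h
  | refl a => exact Iff.rfl
  | symm a b _ ih => exact ih.symm
  | trans a b c _ _ ih1 ih2 => exact ih1.trans ih2

private lemma equiv_mval (hH : IsGlobal LH) {F : G → H} (hF : IsMorphism L LH F id)
    {w v : List G} (he : L.WordEquiv w v) :
    L.WFWord w → mval F LH w = mval F LH v := by
  induction he with
  | rel a b h => exact fun hw => contr_mval hH hF hw h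
  | refl a => exact fun _ => rfl
  | symm a b hab ih => exact fun hwb => (ih ((equiv_wf hab).2 hwb)).symm
  | trans a b c h1 _ ih1 ih2 => exact fun hw => (ih1 hw).trans (ih2 ((equiv_wf h1).1 hw))

end ACUnivAux

/-- Universal property of the associative completion: for an
inversional local groupoid `G` over `M`, a (global) groupoid `H` over the same base,
and a morphism of local groupoids `F : G → H` (over the identity of `M`), there is a
unique groupoid morphism `F̃ : AC(G) → H` (it preserves units, source, target, and
products, the product of classes being represented by concatenation of words) such
that `F̃` composed with the completion map `G → AC(G)` equals `F`. -/
theorem AC_universal_property {G H : Type*} {M : Type*}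
    (L : LocalGroupoid G M) (LH : LocalGroupoid H M) (hH : IsGlobal LH)
    (hinv : ∀ g : G, L.Inversional g)
    (F : G → H) (hF : IsMorphism L LH F id) :
    ∃! Ft : L.AC → H,
      (∀ x : M, Ft (Quotient.mk _ (L.singletonWord (L.unit x))) = LH.unit x) ∧
      (∀ w : L.Word, LH.s (Ft (Quotient.mk _ w)) = L.wordSrc w) ∧
      (∀ w : L.Word, LH.t (Ft (Quotient.mk _ w)) = L.wordTgt w) ∧
      (∀ (w v : L.Word) (h : L.WFWord (w.1 ++ v.1)),
        Ft (Quotient.mk _ (⟨w.1 ++ v.1, h⟩ : L.Word)) =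
          LH.mul (Ft (Quotient.mk _ w)) (Ft (Quotient.mk _ v))) ∧
      (∀ g : G, Ft (L.completion g) = F g) := by
  classical
  have hget : ∀ w : L.Word, (mval F LH w.1).isSome := by
    rintro ⟨l, hl⟩
    cases l with
    | nil => exact absurd rfl hl.1
    | cons g l => rfl
  set f : L.Word → H := fun w => (mval F LH w.1).get (hget w) with hf
  have fval : ∀ (g : G) (l : List G) (hl : L.WFWord (g :: l)),
      f ⟨g :: l, hl⟩ = hv LH (F g) (l.map F) := fun _ _ _ => rfl
  have hresp : ∀ a b : L.Word, a ≈ b → f a = f b := by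
    intro a b hab
    have hmv : mval F LH a.1 = mval F LH b.1 := equiv_mval hH hF hab a.2
    have : some (f a) = some (f b) := by
      rw [hf]; simp only [Option.some_get]; exact hmv
    exact Option.some.inj this
  refine ⟨Quotient.lift f hresp, ⟨?_, ?_, ?_, ?_, ?_⟩, ?_⟩
  · -- units
    intro x
    have : f (L.singletonWord (L.unit x)) = F (L.unit x) := rfl
    rw [Quotient.lift_mk, this, hF.map_unit]; rfl
  · -- source
    rintro ⟨l, hl⟩
    cases l with
    | nil => exact absurd rfl hl.1
    | cons g l =>
      show LH.s (f ⟨g :: l, hl⟩) = _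
      rw [fval]
      have hch : List.Chain' (Rc LH) (F g :: l.map F) := by
        simpa using chain_map hF hl.2
      rw [s_hv hH hch]
      show LH.s ((F g :: l.map F).getLast (by simp)) = L.wordSrc ⟨g :: l, hl⟩
      have : (F g :: l.map F).getLast (by simp)
          = F ((g :: l).getLast (by simp)) := List.getLast_map (f := F) (l := g :: l) (by simp)
      rw [this, hF.map_s]
      rfl
  · -- target
    rintro ⟨l, hl⟩
    cases l with
    | nil => exact absurd rfl hl.1
    | cons g l =>
      show LH.t (f ⟨g :: l, hl⟩) = _
      rw [fval]
      have hch : List.Chain' (Rc LH) (F g :: l.map F) := by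
        simpa using chain_map hF hl.2
      rw [t_hv hH hch, hF.map_t]
      rfl
  · -- products
    rintro ⟨l, hl⟩ ⟨m, hm⟩ happ
    cases l with
    | nil => exact absurd rfl hl.1
    | cons g l =>
      cases m with
      | nil => exact absurd rfl hm.1
      | cons c m =>
        show f ⟨(g :: l) ++ (c :: m), happ⟩ = LH.mul (f ⟨g :: l, hl⟩) (f ⟨c :: m, hm⟩)
        rw [fval, fval]
        have heq : (⟨(g :: l) ++ (c :: m), happ⟩ : L.Word)
            = ⟨g :: (l ++ c :: m), by simpa using happ⟩ := Subtype.ext rfl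
        rw [heq, fval]
        have hch : List.Chain' (Rc LH) (F g :: (l.map F ++ F c :: m.map F)) := by
          have := chain_map hF happ.2
          simpa using this
        have : (l ++ c :: m).map F = l.map F ++ F c :: m.map F := by simp
        rw [this, hv_append hH hch]
  · -- extends F
    intro g
    rfl
  · -- uniqueness
    intro y hy
    obtain ⟨-, -, -, hy4, hy5⟩ := hy
    have ysing : ∀ (g : G) (h : L.WFWord [g]), y (Quotient.mk _ ⟨[g], h⟩) = F g := by
      intro g h
      have h5 := hy5 g
      have e2 : L.singletonWord g = (⟨[g], h⟩ : L.Word) := Subtype.ext rfl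
      rwa [show L.completion g = Quotient.mk _ (L.singletonWord g) from rfl, e2] at h5
    funext q
    induction q using Quotient.ind with
    | _ w =>
      obtain ⟨l, hl⟩ := w
      induction l with
      | nil => exact absurd rfl hl.1
      | cons g l ih =>
        cases l with
        | nil =>
          rw [ysing g hl]
          show F g = f ⟨[g], hl⟩
          rw [fval]
          rfl
        | cons b l' =>
          have hl2 : L.WFWord (b :: l') := ⟨by simp, hl.2.tail⟩
          have h1 : L.WFWord [g] := ⟨by simp, by simp [List.Chain']⟩
          have happ : L.WFWord ([g] ++ (b :: l')) := hl
          have hprod := hy4 ⟨[g], h1⟩ ⟨b :: l', hl2⟩ happ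
          have heq : (⟨[g] ++ (b :: l'), happ⟩ : L.Word) = ⟨g :: b :: l', hl⟩ :=
            Subtype.ext rfl
          rw [heq] at hprod
          rw [hprod, ysing g h1, show y (Quotient.mk _ ⟨b :: l', hl2⟩) = f ⟨b :: l', hl2⟩ from ih hl2]
          show LH.mul (F g) (f ⟨b :: l', hl2⟩) = f ⟨g :: b :: l', hl⟩
          rw [fval, fval]
          have hgb : LH.s (F g) = LH.t (F b) := by
            rw [hF.map_s, hF.map_t]
            exact (List.isChain_cons_cons.1 hl.2).1
          have hch : List.Chain' (Rc LH) (F b :: l'.map F) := by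
            simpa using chain_map hF hl2.2
          rw [mul_hv hH hgb hch]
          rfl
end

section
/- Suppose G is a local groupoid with the following inverse-decomposition property: for every pair (g,h) in the domain of multiplication there exist invertible elements a_1,...,a_l with g = a_l(⋯(a_2 a_1)) and h = a_1^{-1}(⋯(a_l^{-1}(gh))), or invertible elements b_1,...,b_m with h = ((b_1 b_2)⋯)b_m and g = (((gh)b_m^{-1})⋯)b_1^{-1}, all products being defined. Then for any two well-formed words w_1, w_2: w_1 ~ w_2 if and only if there exists a well-formed word w_3 that is a common expansion of both, i.e. w_1 ≤ w_3 and w_2 ≤ w_3 (where w ≤ w' means w' is obtained from w by a finite sequence of expansions). -/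
namespace LocalGroupoid

variable {G : Type*} {M : Type*} {L : LocalGroupoid G M}

/-! ### Basic context lemmas -/

lemma contr_context {u v : List G} (p q : List G) (h : L.Contr u v) :
    L.Contr (p ++ u ++ q) (p ++ v ++ q) := by
  obtain ⟨p', q', hD⟩ := h
  simpa [List.append_assoc] using Contr.mk (L := L) (p ++ p') (q' ++ q) hD

lemma contractsTo_context {u v : List G} (p q : List G) (h : L.ContractsTo u v) :
    L.ContractsTo (p ++ u ++ q) (p ++ v ++ q) :=
  Relation.ReflTransGen.lift (fun l => p ++ l ++ q) (fun _ _ h => contr_context p q h) _ _ h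

lemma ContractsTo.append {u v u' v' : List G} (hu : L.ContractsTo u u')
    (hv : L.ContractsTo v v') : L.ContractsTo (u ++ v) (u' ++ v') := by
  have h1 := contractsTo_context [] v hu
  have h2 := contractsTo_context u' [] hv
  simp at h1 h2
  exact h1.trans h2

/-! ### head/last invariants -/

lemma contr_head {u v : List G} (h : L.Contr u v) :
    u.head?.map L.t = v.head?.map L.t := by
  obtain ⟨p, q, hD⟩ := h
  cases p with
  | nil => simp [L.t_mul hD]
  | cons a p' => simp

lemma contr_last {u v : List G} (h : L.Contr u v) :
    u.getLast?.map L.s = v.getLast?.map L.s := by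
  obtain ⟨p, q, hD⟩ := h
  rename_i g h
  cases q using List.reverseRecOn with
  | nil => simp [List.getLast?_append, L.s_mul hD]
  | append_singleton q' a =>
    rw [show g :: h :: (q' ++ [a]) = (g :: h :: q') ++ [a] by rfl,
      show L.mul g h :: (q' ++ [a]) = (L.mul g h :: q') ++ [a] by rfl,
      ← List.append_assoc, ← List.append_assoc, List.getLast?_concat, List.getLast?_concat]

lemma contractsTo_head {u v : List G} (h : L.ContractsTo u v) :
    u.head?.map L.t = v.head?.map L.t := by
  induction h with
  | refl => rfl
  | tail _ step ih => exact ih.trans (contr_head step)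

lemma contractsTo_last {u v : List G} (h : L.ContractsTo u v) :
    u.getLast?.map L.s = v.getLast?.map L.s := by
  induction h with
  | refl => rfl
  | tail _ step ih => exact ih.trans (contr_last step)

lemma exists_cons_of_contractsTo {U : List G} {k : G} (h : L.ContractsTo U [k]) :
    ∃ u₀ U', U = u₀ :: U' ∧ L.t u₀ = L.t k := by
  have := contractsTo_head h
  cases U with
  | nil => simp at this
  | cons u₀ U' =>
    refine ⟨u₀, U', rfl, ?_⟩
    simpa using this

lemma exists_concat_of_contractsTo {U : List G} {k : G} (h : L.ContractsTo U [k]) :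
    ∃ U' ul, U = U' ++ [ul] ∧ L.s ul = L.s k := by
  have hlast := contractsTo_last h
  rcases List.eq_nil_or_concat U with rfl | ⟨U', ul, rfl⟩
  · simp at hlast
  · refine ⟨U', ul, by simp, ?_⟩
    simp only [List.concat_eq_append, List.getLast?_concat] at hlast
    simpa using hlast

lemma ne_nil_of_contractsTo {U : List G} {k : G} (h : L.ContractsTo U [k]) : U ≠ [] := by
  obtain ⟨u₀, U', rfl, -⟩ := exists_cons_of_contractsTo h
  simp

/-! ### LProd / RProd contraction lemmas -/

lemma lprod_contracts {l : List G} {u r : G} (h : L.LProd l u r) :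
    L.ContractsTo (l ++ [u]) [r] := by
  induction h with
  | nil g => exact Relation.ReflTransGen.refl
  | cons a hl hD ih =>
    rename_i as g p
    have step : L.ContractsTo (a :: (as ++ [g])) (a :: [p]) := by
      simpa using contractsTo_context [a] [] ih
    exact step.trans (Relation.ReflTransGen.single (by simpa using Contr.mk (L := L) [] [] hD))

lemma rprod_contracts {l : List G} {u r : G} (h : L.RProd u l r) :
    L.ContractsTo (u :: l) [r] := by
  induction h with
  | nil g => exact Relation.ReflTransGen.refl
  | cons b hD hr ih =>
    rename_i bs g r'
    exact (Relation.ReflTransGen.single (by simpa using Contr.mk (L := L) [] bs hD)).trans ih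


/-! ### Collapse lemmas -/

lemma collapse_left (a : List (G × G)) {u p : G} (U : List G)
    (hinv : ∀ pr ∈ a, L.InvPair pr.1 pr.2)
    (hL : L.LProd ((a.map Prod.fst).reverse) u p) (hu : ∃ x, u = L.unit x) :
    L.ContractsTo ((a.map Prod.fst).reverse ++ [u] ++ (a.map Prod.snd) ++ U)
      (L.unit (L.t p) :: U) := by
  induction a using List.reverseRecOn generalizing p U with
  | nil =>
    cases hL
    obtain ⟨x, rfl⟩ := hu
    have hr : L.ContractsTo (L.unit x :: U) (L.unit x :: U) := Relation.ReflTransGen.refl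
    simpa [L.t_unit] using hr
  | append_singleton a' pr ih =>
    simp only [List.map_append, List.reverse_append, List.map_cons, List.map_nil,
      List.reverse_cons, List.reverse_nil, List.nil_append, List.singleton_append,
      List.cons_append, List.append_assoc] at hL ⊢
    cases hL with
    | cons _ hL' hD =>
      rename_i p'
      have hpr := hinv pr (by simp)
      have ih' := ih (pr.2 :: U) (fun q hq => hinv q (List.mem_append_left _ hq)) hL'
      have step1 : L.ContractsTo
          (pr.1 :: ((a'.map Prod.fst).reverse ++ u :: (a'.map Prod.snd ++ pr.2 :: U)))
          (pr.1 :: L.unit (L.t p') :: pr.2 :: U) := by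
        have := contractsTo_context [pr.1] [] ih'
        simpa [List.append_assoc] using this
      have htp' : L.t p' = L.t pr.2 := by
        rw [← L.D_st hD, L.D_st hpr.1]
      have step2 : L.Contr (pr.1 :: L.unit (L.t p') :: pr.2 :: U) (pr.1 :: pr.2 :: U) := by
        have := Contr.mk (L := L) [pr.1] U (L.D_unit_left pr.2)
        rw [L.unit_mul] at this
        simpa [htp'] using this
      have step3 : L.Contr (pr.1 :: pr.2 :: U) (L.unit (L.t (L.mul pr.1 p')) :: U) := by
        have := Contr.mk (L := L) [] U hpr.1
        rw [hpr.2.2.1] at this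
        simpa [L.t_mul hD] using this
      exact (step1.trans (Relation.ReflTransGen.single step2)).trans
        (Relation.ReflTransGen.single step3)

lemma collapse_right (b : List (G × G)) {z h : G} (U : List G)
    (hinv : ∀ pr ∈ b, L.InvPair pr.1 pr.2)
    (hR : L.RProd z (b.map Prod.fst) h) :
    L.ContractsTo (U ++ (b.map Prod.snd).reverse ++ [L.unit (L.s z)] ++ (b.map Prod.fst))
      (U ++ [L.unit (L.s h)]) := by
  induction b generalizing z U with
  | nil =>
    cases hR
    simp only [List.map_nil, List.reverse_nil, List.append_nil, List.nil_append]
    exact Relation.ReflTransGen.refl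
  | cons pr b' ih =>
    simp only [List.map_cons, List.reverse_cons, List.append_assoc, List.cons_append,
      List.singleton_append] at hR ⊢
    cases hR with
    | cons _ hD hR' =>
      have hpr := hinv pr (by simp)
      have step1 : L.Contr
          (U ++ ((b'.map Prod.snd).reverse ++ pr.2 :: L.unit (L.s z) :: pr.1 :: b'.map Prod.fst))
          (U ++ ((b'.map Prod.snd).reverse ++ pr.2 :: pr.1 :: b'.map Prod.fst)) := by
        have := Contr.mk (L := L) (U ++ (b'.map Prod.snd).reverse ++ [pr.2])
          (b'.map Prod.fst) (L.D_unit_left pr.1)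
        rw [L.unit_mul] at this
        simpa [List.append_assoc, L.D_st hD] using this
      have step2 : L.Contr
          (U ++ ((b'.map Prod.snd).reverse ++ pr.2 :: pr.1 :: b'.map Prod.fst))
          (U ++ ((b'.map Prod.snd).reverse ++ L.unit (L.s (L.mul z pr.1)) :: b'.map Prod.fst)) := by
        have := Contr.mk (L := L) (U ++ (b'.map Prod.snd).reverse)
          (b'.map Prod.fst) hpr.2.1
        rw [hpr.2.2.2] at this
        simpa [List.append_assoc, L.s_mul hD] using this
      have ih' := ih U (fun q hq => hinv q (List.mem_cons_of_mem _ hq)) hR'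
      refine ((Relation.ReflTransGen.single step1).trans
        (Relation.ReflTransGen.single step2)).trans ?_
      change L.ContractsTo _ _
      simpa [List.append_assoc] using ih'


/-! ### Refinement via inverse decomposition -/

lemma refine_lemma (hID : L.InvDecomp) {x y : G} (hD : L.D x y) {U : List G}
    (hU : L.ContractsTo U [L.mul x y]) :
    ∃ Wx Wy, L.ContractsTo Wx [x] ∧ L.ContractsTo Wy [y] ∧ L.ContractsTo (Wx ++ Wy) U := by
  rcases hID x y hD with ⟨a, hinv, hL1, hL2⟩ | ⟨b, hinv, hR1, hR2⟩
  · refine ⟨(a.map Prod.fst).reverse ++ [L.unit (L.s x)], (a.map Prod.snd) ++ U, ?_, ?_, ?_⟩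
    · exact lprod_contracts hL1
    · exact (ContractsTo.append (Relation.ReflTransGen.refl) hU).trans (lprod_contracts hL2)
    · obtain ⟨u₀, U', rfl, htu⟩ := exists_cons_of_contractsTo hU
      have hcol := collapse_left a (u₀ :: U') hinv hL1 ⟨_, rfl⟩
      refine (show L.ContractsTo _ _ by simpa [List.append_assoc] using hcol).trans ?_
      have hx : L.t u₀ = L.t x := htu.trans (L.t_mul hD)
      have hstep : L.Contr (L.unit (L.t u₀) :: u₀ :: U') (u₀ :: U') := by
        have := Contr.mk (L := L) [] U' (L.D_unit_left u₀)
        rw [L.unit_mul] at this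
        simpa using this
      exact Relation.ReflTransGen.single (by simpa [hx] using hstep)
  · refine ⟨U ++ (b.map Prod.snd).reverse, L.unit (L.t y) :: (b.map Prod.fst), ?_, ?_, ?_⟩
    · refine (ContractsTo.append hU (Relation.ReflTransGen.refl)).trans ?_
      change L.ContractsTo _ _
      simpa using rprod_contracts hR2
    · exact rprod_contracts hR1
    · have hcol := collapse_right b U hinv hR1
      rw [L.s_unit] at hcol
      obtain ⟨U'', ul, rfl, hsl⟩ := exists_concat_of_contractsTo hU
      refine (show L.ContractsTo _ _ by simpa [List.append_assoc] using hcol).trans ?_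
      have hsy : L.s ul = L.s y := hsl.trans (L.s_mul hD)
      have hstep : L.Contr (U'' ++ [ul, L.unit (L.s ul)]) (U'' ++ [ul]) := by
        have := Contr.mk (L := L) U'' [] (L.D_unit_right ul)
        rw [L.mul_unit_right] at this
        simpa using this
      refine Relation.ReflTransGen.single ?_
      simpa [hsy, List.append_assoc] using hstep

/-! ### Splitting contractions over append -/

lemma contr_split {v w v₁' v₂' : List G} (h : L.Contr v w) (hw : w = v₁' ++ v₂') :
    ∃ v₁ v₂, v = v₁ ++ v₂ ∧ L.ContractsTo v₁ v₁' ∧ L.ContractsTo v₂ v₂' := by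
  obtain ⟨p, q, hD⟩ := h
  rename_i g h
  rcases List.append_eq_append_iff.mp hw with ⟨a, ha1, ha2⟩ | ⟨c, hc1, hc2⟩
  · cases a with
    | nil =>
      refine ⟨p, g :: h :: q, rfl, ?_, ?_⟩
      · simp only [List.append_nil] at ha1
        rw [ha1]
        exact Relation.ReflTransGen.refl
      · simp only [List.nil_append] at ha2
        rw [← ha2]
        exact Relation.ReflTransGen.single (by simpa using Contr.mk (L := L) [] q hD)
    | cons a₀ a' =>
      rw [List.cons_append] at ha2
      injection ha2 with e1 e2
      subst e1
      refine ⟨p ++ g :: h :: a', v₂', by simp [e2], ?_, Relation.ReflTransGen.refl⟩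
      rw [ha1]
      exact Relation.ReflTransGen.single (Contr.mk (L := L) p a' hD)
  · refine ⟨v₁', c ++ g :: h :: q, by simp [hc1], Relation.ReflTransGen.refl, ?_⟩
    rw [hc2]
    exact Relation.ReflTransGen.single (Contr.mk (L := L) c q hD)

lemma contractsTo_split {v w₁ w₂ : List G} (h : L.ContractsTo v (w₁ ++ w₂)) :
    ∃ v₁ v₂, v = v₁ ++ v₂ ∧ L.ContractsTo v₁ w₁ ∧ L.ContractsTo v₂ w₂ := by
  induction h using Relation.ReflTransGen.head_induction_on with
  | refl => exact ⟨w₁, w₂, rfl, Relation.ReflTransGen.refl, Relation.ReflTransGen.refl⟩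
  | head step _ ih =>
    obtain ⟨v₁', v₂', rfl, h1, h2⟩ := ih
    obtain ⟨v₁, v₂, rfl, g1, g2⟩ := contr_split step rfl
    exact ⟨v₁, v₂, rfl, g1.trans h1, g2.trans h2⟩

lemma contr_elim {u v : List G} (h : L.Contr u v) :
    ∃ p q g h', L.D g h' ∧ u = p ++ g :: h' :: q ∧ v = p ++ L.mul g h' :: q := by
  obtain ⟨p, q, hD⟩ := h
  exact ⟨p, q, _, _, hD, rfl, rfl⟩

lemma contr_to_single {c : List G} {k : G} (h : L.Contr c [k]) :
    ∃ g h', L.D g h' ∧ c = [g, h'] ∧ L.mul g h' = k := by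
  obtain ⟨p, q, g, h', hD, rfl, hv⟩ := contr_elim h
  cases p with
  | nil =>
    cases q with
    | nil => exact ⟨_, _, hD, rfl, by simpa using hv.symm⟩
    | cons z zs => simp at hv
  | cons z zs => simp at hv

lemma contractsTo_nil {u : List G} (h : L.ContractsTo u []) : u = [] := by
  induction h using Relation.ReflTransGen.head_induction_on with
  | refl => rfl
  | head step _ ih =>
    subst ih
    obtain ⟨p, q, g, h', hD, rfl, hv⟩ := contr_elim step
    simp at hv

/-! ### Confluence of expansions -/

lemma join_single (hID : L.InvDecomp) (n : ℕ) : ∀ {V : List G}, V.length ≤ n →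
    ∀ {U : List G} {k : G}, L.ContractsTo U [k] → L.ContractsTo V [k] →
    ∃ Z, L.ContractsTo Z U ∧ L.ContractsTo Z V := by
  induction n with
  | zero =>
    intro V hlen U k hU hV
    exact absurd (List.length_eq_zero_iff.mp (Nat.le_zero.mp hlen)) (ne_nil_of_contractsTo hV)
  | succ n ih =>
    intro V hlen U k hU hV
    rcases Relation.ReflTransGen.cases_tail hV with heq | ⟨c, hVc, hstep⟩
    · exact ⟨U, Relation.ReflTransGen.refl, heq ▸ hU⟩
    · obtain ⟨g, h, hD, rfl, hk⟩ := contr_to_single hstep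
      subst hk
      obtain ⟨V₁, V₂, rfl, hV₁, hV₂⟩ := contractsTo_split (w₁ := [g]) (w₂ := [h]) hVc
      obtain ⟨W₁, W₂, hW₁, hW₂, hWU⟩ := refine_lemma hID hD hU
      have l₁ : V₁.length ≤ n := by
        have n₂ : V₂ ≠ [] := ne_nil_of_contractsTo hV₂
        have : 1 ≤ V₂.length := List.length_pos_iff.mpr n₂
        have := hlen
        simp only [List.length_append] at this
        omega
      have l₂ : V₂.length ≤ n := by
        have n₁ : V₁ ≠ [] := ne_nil_of_contractsTo hV₁
        have : 1 ≤ V₁.length := List.length_pos_iff.mpr n₁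
        have := hlen
        simp only [List.length_append] at this
        omega
      obtain ⟨Z₁, hZ₁W, hZ₁V⟩ := ih l₁ hW₁ hV₁
      obtain ⟨Z₂, hZ₂W, hZ₂V⟩ := ih l₂ hW₂ hV₂
      exact ⟨Z₁ ++ Z₂, (ContractsTo.append hZ₁W hZ₂W).trans hWU,
        ContractsTo.append hZ₁V hZ₂V⟩

lemma join (hID : L.InvDecomp) : ∀ {w u v : List G},
    L.ContractsTo u w → L.ContractsTo v w →
    ∃ z, L.ContractsTo z u ∧ L.ContractsTo z v := by
  intro w
  induction w with
  | nil =>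
    intro u v hu hv
    rw [contractsTo_nil hu, contractsTo_nil hv]
    exact ⟨[], Relation.ReflTransGen.refl, Relation.ReflTransGen.refl⟩
  | cons k w' ihw =>
    intro u v hu hv
    obtain ⟨u₁, u₂, rfl, hu₁, hu₂⟩ := contractsTo_split (w₁ := [k]) (w₂ := w') hu
    obtain ⟨v₁, v₂, rfl, hv₁, hv₂⟩ := contractsTo_split (w₁ := [k]) (w₂ := w') hv
    obtain ⟨Z₁, hZ₁u, hZ₁v⟩ := join_single hID v₁.length le_rfl hu₁ hv₁
    obtain ⟨Z₂, hZ₂u, hZ₂v⟩ := ihw hu₂ hv₂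
    exact ⟨Z₁ ++ Z₂, ContractsTo.append hZ₁u hZ₂u, ContractsTo.append hZ₁v hZ₂v⟩

/-! ### Well-formedness and equivalence -/

lemma wf_of_contr {u v : List G} (h : L.Contr u v) (hv : L.WFWord v) : L.WFWord u := by
  obtain ⟨p, q, hD⟩ := h
  rename_i g h
  obtain ⟨-, hchain⟩ := hv
  refine ⟨by simp, ?_⟩
  unfold List.Chain' at hchain ⊢
  rw [List.isChain_append] at hchain ⊢
  obtain ⟨hp, hgq, hlink⟩ := hchain
  rw [List.isChain_cons] at hgq
  refine ⟨hp, ?_, ?_⟩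
  · rw [List.isChain_cons_cons, List.isChain_cons]
    exact ⟨L.D_st hD, fun y hy => (L.s_mul hD) ▸ hgq.1 y hy, hgq.2⟩
  · intro x hx y hy
    simp only [List.head?_cons, Option.mem_def, Option.some.injEq] at hy
    subst hy
    have := hlink x hx (L.mul g h) (by simp)
    rw [this, L.t_mul hD]

lemma wf_of_contractsTo {u v : List G} (h : L.ContractsTo u v) : L.WFWord v → L.WFWord u := by
  induction h with
  | refl => exact id
  | tail _ step ih => exact fun hv => ih (wf_of_contr step hv)

lemma contractsTo_wordEquiv {a b : List G} (h : L.ContractsTo a b) : L.WordEquiv a b := by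
  induction h with
  | refl => exact Relation.EqvGen.refl _
  | tail _ step ih => exact Relation.EqvGen.trans _ _ _ ih (Relation.EqvGen.rel _ _ step)

end LocalGroupoid

/-- For a local groupoid with the inverse-decomposition property,
two well-formed words are equivalent if and only if they admit a common expansion:
`w₁ ~ w₂ ↔ ∃ w₃, w₁ ≤ w₃ ∧ w₂ ≤ w₃` (where `w ≤ w₃` means `w₃` is obtained from
`w` by a finite sequence of expansions, i.e. `w₃` contracts to `w`). -/
theorem wordEquiv_iff_common_expansion {G M : Type*} (L : LocalGroupoid G M)
    (hID : L.InvDecomp)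
    (w₁ w₂ : List G) (h₁ : L.WFWord w₁) (h₂ : L.WFWord w₂) :
    L.WordEquiv w₁ w₂ ↔
      ∃ w₃, L.WFWord w₃ ∧ L.ContractsTo w₃ w₁ ∧ L.ContractsTo w₃ w₂ := by
  constructor
  · intro h
    have aux : ∀ u v : List G, L.WordEquiv u v →
        ∃ z, L.ContractsTo z u ∧ L.ContractsTo z v := by
      intro u v h
      induction h with
      | rel a b hab => exact ⟨a, Relation.ReflTransGen.refl, Relation.ReflTransGen.single hab⟩
      | refl a => exact ⟨a, Relation.ReflTransGen.refl, Relation.ReflTransGen.refl⟩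
      | symm a b _ ih =>
        obtain ⟨z, h1, h2⟩ := ih
        exact ⟨z, h2, h1⟩
      | trans a b c _ _ ih1 ih2 =>
        obtain ⟨z₁, h1a, h1b⟩ := ih1
        obtain ⟨z₂, h2b, h2c⟩ := ih2
        obtain ⟨z, hz1, hz2⟩ := LocalGroupoid.join hID h1b h2b
        exact ⟨z, hz1.trans h1a, hz2.trans h2c⟩
    obtain ⟨z, hz1, hz2⟩ := aux w₁ w₂ h
    exact ⟨z, LocalGroupoid.wf_of_contractsTo hz1 h₁, hz1, hz2⟩
  · rintro ⟨z, -, hz1, hz2⟩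
    exact Relation.EqvGen.trans _ _ _
      (Relation.EqvGen.symm _ _ (LocalGroupoid.contractsTo_wordEquiv hz1))
      (LocalGroupoid.contractsTo_wordEquiv hz2)
end

section
/- Counterexample to word contraction without simple connectedness: let Γ = ℝ/ℤ and U = (-0.5, 0.5) mod ℤ, viewed as a local group with multiplication defined when the representatives sum into (-0.5,0.5). Then in Γ one has 0.25+0.25+0.25+0.25 = 0, but the word (0.25, 0.25, 0.25, 0.25) is NOT equivalent to the word (0) in W(U); equivalently, the natural homomorphism AC(U) → ℝ/ℤ is not injective. -/
/-- The open interval `(-1/2, 1/2) ⊂ ℝ`, the set of canonical representatives of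
`U = (-0.5, 0.5) mod ℤ ⊂ ℝ/ℤ`. -/
def Ihalf : Set ℝ := Set.Ioo (-(1/2) : ℝ) (1/2)

open Classical in
/-- The local group `U = (-0.5, 0.5)`: the sum of two elements is defined iff the sum
of the canonical representatives again lies in `(-0.5, 0.5)`. -/
noncomputable def intervalLocalGroupHalf : LocalGroupoid Ihalf Unit where
  s _ := ()
  t _ := ()
  unit _ := ⟨0, by norm_num [Ihalf]⟩
  s_unit _ := rfl
  t_unit _ := rfl
  D a b := (a : ℝ) + b ∈ Ihalf
  D_st _ := rfl
  mul a b := if h : (a : ℝ) + b ∈ Ihalf then ⟨(a : ℝ) + b, h⟩ else ⟨0, by norm_num [Ihalf]⟩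
  D_unit_right g := by simpa using g.2
  D_unit_left g := by simpa using g.2
  s_mul _ := rfl
  t_mul _ := rfl
  mul_unit_right g := by rcases g with ⟨g, hg⟩; simp [hg]
  unit_mul g := by rcases g with ⟨g, hg⟩; simp [hg]
  assoc3 := by
    rintro ⟨g, hg⟩ ⟨h, hh⟩ ⟨k, hk⟩ d1 d2 d3 d4
    simp only [dif_pos d1] at d2 ⊢
    simp only [dif_pos d3] at d4 ⊢
    simp only [dif_pos d2, dif_pos d4]
    exact Subtype.ext (add_assoc g h k)

/-- The element `0.25` of the local group `U`. -/
noncomputable def qtr : Ihalf := ⟨1/4, by norm_num [Ihalf]⟩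

/-- The element `0` of the local group `U`. -/
noncomputable def zeroU : Ihalf := ⟨0, by norm_num [Ihalf]⟩


lemma contr_sum_eq {w v : List Ihalf} (h : intervalLocalGroupHalf.Contr w v) :
    (w.map Subtype.val).sum = (v.map Subtype.val).sum := by
  obtain ⟨p, q, hD⟩ := h
  rename_i g h
  have : (intervalLocalGroupHalf.mul g h : ℝ) = (g : ℝ) + h := by
    have hD' : (g : ℝ) + h ∈ Ihalf := hD
    simp [intervalLocalGroupHalf, dif_pos hD']
  simp [this]
  ring

lemma wordEquiv_sum_eq {w v : List Ihalf} (h : intervalLocalGroupHalf.WordEquiv w v) :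
    (w.map Subtype.val).sum = (v.map Subtype.val).sum := by
  induction h with
  | rel _ _ h => exact contr_sum_eq h
  | refl => rfl
  | symm _ _ _ ih => exact ih.symm
  | trans _ _ _ _ _ ih1 ih2 => exact ih1.trans ih2

/-- In `Γ = ℝ/ℤ` one has `0.25 + 0.25 + 0.25 + 0.25 = 0`, but in
the local group `U = (-0.5, 0.5) mod ℤ` the word `(0.25, 0.25, 0.25, 0.25)` is not
equivalent to the one-letter word `(0)`; equivalently, the natural homomorphism
`AC(U) → ℝ/ℤ` is not injective. -/
theorem interval_word_not_contractible :
    ((((1 : ℝ)/4 + 1/4 + 1/4 + 1/4 : ℝ) : AddCircle (1 : ℝ)) = 0) ∧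
    ¬ intervalLocalGroupHalf.WordEquiv [qtr, qtr, qtr, qtr] [zeroU] ∧
    ∃ w v : List Ihalf, w ≠ [] ∧ v ≠ [] ∧
      (((w.map Subtype.val).sum : ℝ) : AddCircle (1 : ℝ)) =
        (((v.map Subtype.val).sum : ℝ) : AddCircle (1 : ℝ)) ∧
      ¬ intervalLocalGroupHalf.WordEquiv w v := by
  have hsum4 : (([qtr, qtr, qtr, qtr] : List Ihalf).map Subtype.val).sum = (1 : ℝ) := by
    simp [qtr]; norm_num
  have hsum0 : (([zeroU] : List Ihalf).map Subtype.val).sum = (0 : ℝ) := by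
    simp [zeroU]
  have hne : ¬ intervalLocalGroupHalf.WordEquiv [qtr, qtr, qtr, qtr] [zeroU] := by
    intro h
    have := wordEquiv_sum_eq h
    rw [hsum4, hsum0] at this
    norm_num at this
  have hcirc : ((((1 : ℝ)/4 + 1/4 + 1/4 + 1/4 : ℝ) : AddCircle (1 : ℝ)) = 0) := by
    have : ((1:ℝ)/4 + 1/4 + 1/4 + 1/4 : ℝ) = 1 := by norm_num
    rw [this]
    exact AddCircle.coe_period 1
  refine ⟨hcirc, hne, [qtr, qtr, qtr, qtr], [zeroU], by simp, by simp, ?_, hne⟩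
  rw [hsum4, hsum0]
  exact AddCircle.coe_period 1
end
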